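/- The generalized-logistic Fourier identity: for A > 0 and c > 0, ∫_ℝ e^{ixz} (cosh(cz))^{−A} dz = (2^{A−1}/c) · |Γ(A/2 + ix/(2c))|² / Γ(A). -/

import Mathlib

open Real Complex MeasureTheory

lemma cpow_pos_eq_exp {r : ℝ} (hr : 0 < r) (w : ℂ) :
    (r : ℂ) ^ w = Complex.exp ((Real.log r : ℂ) * w) := by
  rw [Complex.cpow_def_of_ne_zero (by exact_mod_cast hr.ne'), Complex.ofReal_log hr.le]

lemma cosh_key {c u : ℝ} (hc : 0 < c) (h0 : 0 < u) (h1 : u < 1) :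
    Real.cosh (c * ((Real.log u - Real.log (1 - u)) / (2 * c)))
      = (2 * (Real.sqrt u * Real.sqrt (1 - u)))⁻¹ := by
  have h1u : 0 < 1 - u := by linarith
  have ha : 0 < Real.sqrt u := Real.sqrt_pos.2 h0
  have hb : 0 < Real.sqrt (1 - u) := Real.sqrt_pos.2 h1u
  have e1 : Real.exp (Real.log u / 2) = Real.sqrt u := by
    rw [Real.sqrt_eq_rpow, Real.rpow_def_of_pos h0]; ring_nf
  have e2 : Real.exp (Real.log (1 - u) / 2) = Real.sqrt (1 - u) := by
    rw [Real.sqrt_eq_rpow, Real.rpow_def_of_pos h1u]; ring_nf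
  have harg : c * ((Real.log u - Real.log (1 - u)) / (2 * c))
      = Real.log u / 2 - Real.log (1 - u) / 2 := by field_simp
  rw [harg, Real.cosh_eq, Real.exp_sub, neg_sub, Real.exp_sub, e1, e2]
  have hau : Real.sqrt u * Real.sqrt u = u := Real.mul_self_sqrt h0.le
  have hbu : Real.sqrt (1 - u) * Real.sqrt (1 - u) = 1 - u := Real.mul_self_sqrt h1u.le
  field_simp
  nlinarith [hau, hbu]

lemma pointwise_key (A c x u : ℝ) (hc : 0 < c) (h0 : 0 < u) (h1 : u < 1) :
    ((2 * c * u * (1 - u))⁻¹ : ℝ) •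
      (Complex.exp (Complex.I * x * ((Real.log u - Real.log (1 - u)) / (2 * c) : ℝ)) *
        ((Real.cosh (c * ((Real.log u - Real.log (1 - u)) / (2 * c))) : ℂ) ^ (-(A : ℂ))))
    = ((2 : ℂ) ^ ((A : ℂ) - 1) / c) *
        ((u : ℂ) ^ (((A / 2 : ℝ) + Complex.I * (x / (2 * c))) - 1) *
          ((1 : ℂ) - u) ^ (((A / 2 : ℝ) - Complex.I * (x / (2 * c))) - 1)) := by
  have hcosh := cosh_key hc h0 h1
  have h1u : 0 < 1 - u := by linarith
  have hab : 0 < Real.sqrt u * Real.sqrt (1 - u) :=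
    mul_pos (Real.sqrt_pos.2 h0) (Real.sqrt_pos.2 h1u)
  have hr : 0 < (2 * (Real.sqrt u * Real.sqrt (1 - u)))⁻¹ := by positivity
  have hlogr : Real.log ((2 * (Real.sqrt u * Real.sqrt (1 - u)))⁻¹)
      = -(Real.log 2 + (Real.log u / 2 + Real.log (1 - u) / 2)) := by
    rw [Real.log_inv, Real.log_mul (by norm_num) hab.ne', Real.log_mul
      (Real.sqrt_pos.2 h0).ne' (Real.sqrt_pos.2 h1u).ne', Real.log_sqrt h0.le,
      Real.log_sqrt h1u.le]
  have hy : ((2 * c * u * (1 - u))⁻¹ : ℝ)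
      = c⁻¹ * Real.exp (-(Real.log 2 + (Real.log u + Real.log (1 - u)))) := by
    rw [Real.exp_neg, Real.exp_add, Real.exp_add, Real.exp_log (by norm_num : (0:ℝ) < 2),
      Real.exp_log h0, Real.exp_log h1u]
    field_simp
  have h2 : ((1 : ℂ) - u) = ((1 - u : ℝ) : ℂ) := by push_cast; ring
  rw [hcosh, hy, h2, cpow_pos_eq_exp hr, hlogr,
    cpow_pos_eq_exp h0, cpow_pos_eq_exp h1u,
    show (2 : ℂ) = ((2 : ℝ) : ℂ) by norm_num, cpow_pos_eq_exp (by norm_num : (0:ℝ) < 2)]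
  simp only [Complex.real_smul, Complex.ofReal_mul, Complex.ofReal_exp, Complex.ofReal_inv,
    div_eq_mul_inv, ← Complex.exp_add]
  rw [mul_left_comm, mul_assoc, ← Complex.exp_add, mul_comm (Complex.exp _) ((c:ℂ))⁻¹,
    mul_assoc, mul_assoc, ← Complex.exp_add]
  congr 2
  push_cast
  field_simp
  ring

/-- generalized-logistic Fourier identity: for `A > 0`, `c > 0`,
`∫ e^{ixz} cosh(cz)^{−A} dz = (2^{A−1}/c) |Γ(A/2 + ix/(2c))|² / Γ(A)`. -/
theorem cosh_fourier_gamma (A c x : ℝ) (hA : 0 < A) (hc : 0 < c) :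
    (∫ z : ℝ, Complex.exp (Complex.I * x * z) *
        ((Real.cosh (c * z) : ℂ) ^ (-(A : ℂ))))
      = ((2 : ℂ) ^ ((A : ℂ) - 1) / c) *
        (Complex.Gamma ((A / 2 : ℝ) + Complex.I * (x / (2 * c))) *
          Complex.Gamma ((A / 2 : ℝ) - Complex.I * (x / (2 * c)))) /
        (Complex.Gamma (A : ℂ)) := by
  have h2c : (0:ℝ) < 2 * c := by linarith
  set f : ℝ → ℝ := fun u => (Real.log u - Real.log (1 - u)) / (2 * c) with hf
  set f' : ℝ → ℝ := fun u => (2 * c * u * (1 - u))⁻¹ with hf'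
  have hderiv : ∀ u ∈ Set.Ioo (0:ℝ) 1, HasDerivWithinAt f (f' u) (Set.Ioo 0 1) u := by
    rintro u ⟨h0, h1⟩
    have h1u : 0 < 1 - u := by linarith
    have d1 : HasDerivAt (fun u : ℝ => Real.log u) u⁻¹ u := Real.hasDerivAt_log h0.ne'
    have d2 : HasDerivAt (fun u : ℝ => Real.log (1 - u)) (-1 / (1 - u)) u := by
      have h : HasDerivAt (fun u : ℝ => 1 - u) (-1) u := by
        simpa using (hasDerivAt_id u).const_sub 1
      simpa using h.log h1u.ne'
    have : HasDerivAt f ((u⁻¹ - -1 / (1 - u)) / (2 * c)) u := (d1.sub d2).div_const (2 * c)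
    have heq : f' u = (u⁻¹ - -1 / (1 - u)) / (2 * c) := by
      show (2 * c * u * (1 - u))⁻¹ = _
      field_simp
      ring
    rw [heq]
    exact this.hasDerivWithinAt
  have hmono : StrictMonoOn f (Set.Ioo (0:ℝ) 1) := by
    rintro u ⟨hu0, hu1⟩ v ⟨hv0, hv1⟩ huv
    have l1 : Real.log u < Real.log v := Real.log_lt_log hu0 huv
    have l2 : Real.log (1 - v) < Real.log (1 - u) :=
      Real.log_lt_log (by linarith) (by linarith)
    have : Real.log u - Real.log (1 - u) < Real.log v - Real.log (1 - v) := by linarith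
    simp only [hf]
    gcongr
  have hinj : Set.InjOn f (Set.Ioo 0 1) := hmono.injOn
  have himg : f '' Set.Ioo 0 1 = Set.univ := by
    apply Set.eq_univ_of_forall
    intro z
    have he : 0 < Real.exp (2 * c * z) := Real.exp_pos _
    have h1e : 0 < 1 + Real.exp (2 * c * z) := by linarith
    refine ⟨Real.exp (2 * c * z) / (1 + Real.exp (2 * c * z)), ⟨by positivity, ?_⟩, ?_⟩
    · rw [div_lt_one h1e]; linarith
    · have hsub : 1 - Real.exp (2 * c * z) / (1 + Real.exp (2 * c * z))
          = (1 + Real.exp (2 * c * z))⁻¹ := by field_simp; ring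
      simp only [hf, hsub]
      rw [Real.log_div he.ne' h1e.ne', Real.log_inv, Real.log_exp]
      field_simp; ring
  rw [← MeasureTheory.setIntegral_univ, ← himg,
    MeasureTheory.integral_image_eq_integral_abs_deriv_smul measurableSet_Ioo hderiv hinj]
  rw [MeasureTheory.setIntegral_congr_fun measurableSet_Ioo
    (g := fun u : ℝ => ((2 : ℂ) ^ ((A : ℂ) - 1) / c) *
        ((u : ℂ) ^ (((A / 2 : ℝ) + Complex.I * (x / (2 * c))) - 1) *
          ((1 : ℂ) - u) ^ (((A / 2 : ℝ) - Complex.I * (x / (2 * c))) - 1)))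
    (fun u hu => by
      obtain ⟨h0, h1⟩ := hu
      have h1u : (0:ℝ) < 1 - u := by linarith
      have hfp : 0 < f' u := inv_pos.2 (mul_pos (mul_pos h2c h0) h1u)
      rw [abs_of_pos hfp]
      exact pointwise_key A c x u hc h0 h1)]
  rw [MeasureTheory.integral_const_mul]
  have hbeta : (∫ u in Set.Ioo (0:ℝ) 1,
      (u : ℂ) ^ (((A / 2 : ℝ) + Complex.I * (x / (2 * c))) - 1) *
        ((1 : ℂ) - u) ^ (((A / 2 : ℝ) - Complex.I * (x / (2 * c))) - 1))
      = Complex.betaIntegral ((A / 2 : ℝ) + Complex.I * (x / (2 * c)))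
          ((A / 2 : ℝ) - Complex.I * (x / (2 * c))) := by
    rw [Complex.betaIntegral, intervalIntegral.integral_of_le zero_le_one,
      MeasureTheory.integral_Ioc_eq_integral_Ioo]
  rw [hbeta]
  have hw : ((x : ℂ) / (2 * (c : ℂ))) = ((x / (2 * c) : ℝ) : ℂ) := by push_cast; ring
  have hres : (((A / 2 : ℝ) : ℂ) + Complex.I * (x / (2 * c))).re = A / 2 := by
    rw [hw]; simp [Complex.add_re, Complex.mul_re]
    simp [Complex.div_im]
  have hret : (((A / 2 : ℝ) : ℂ) - Complex.I * (x / (2 * c))).re = A / 2 := by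
    rw [hw]; simp [Complex.sub_re, Complex.mul_re]
    simp [Complex.div_im]
  have hG := Complex.Gamma_mul_Gamma_eq_betaIntegral
    (s := ((A / 2 : ℝ) : ℂ) + Complex.I * (x / (2 * c)))
    (t := ((A / 2 : ℝ) : ℂ) - Complex.I * (x / (2 * c)))
    (by rw [hres]; positivity) (by rw [hret]; positivity)
  have hst : (((A / 2 : ℝ) : ℂ) + Complex.I * (x / (2 * c)))
      + (((A / 2 : ℝ) : ℂ) - Complex.I * (x / (2 * c))) = (A : ℂ) := by push_cast; ring
  rw [hst] at hG
  have hGA : Complex.Gamma (A : ℂ) ≠ 0 :=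
    Complex.Gamma_ne_zero_of_re_pos (by simpa using hA)
  rw [eq_div_iff hGA, hG]
  ring
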